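/- Let X be a real Banach space, A ⊆ X a bounded subset and ε > 0. Suppose there exists N ∈ ℕ such that for every x* in the closed unit ball B_{X*} of X*, the set {x ∈ A : |x*(x)| > ε} has at most N elements. Then γ(A) ≤ ε, i.e., the weak*-closure of J(A) in the bidual X** is contained in J(X) + ε'·B_{X**} for every ε' > ε, where J : X → X** is the canonical embedding. -/

import Mathlib

open NormedSpace Pointwise

/-- If `A` is a bounded subset of a real Banach space `X` and for some `ε > 0` there
is `N ∈ ℕ` such that `{x ∈ A : |x*(x)| > ε}` has at most `N` elements for every `x*` in the
closed unit ball of `X*`, then `γ(A) ≤ ε`: for every `ε' > ε`, the weak*-closure of `J(A)` in the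
bidual is contained in `J(X) + ε'·B_{X**}`, where `J` is the canonical embedding. -/
theorem statement1 {X : Type*} [NormedAddCommGroup X] [NormedSpace ℝ X] [CompleteSpace X]
    (A : Set X) (hA : Bornology.IsBounded A) (ε : ℝ) (hε : 0 < ε) (N : ℕ)
    (h : ∀ f : X →L[ℝ] ℝ, ‖f‖ ≤ 1 → {x ∈ A | ε < |f x|}.encard ≤ (N : ℕ∞)) :
    ∀ ε' > ε,
      StrongDual.toWeakDual ⁻¹'
          closure (StrongDual.toWeakDual ''
            (inclusionInDoubleDual ℝ X '' A)) ⊆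
        Set.range (inclusionInDoubleDual ℝ X) +
          Metric.closedBall (0 : StrongDual ℝ (StrongDual ℝ X)) ε' := by
  intro ε' hε' F hF
  set J := inclusionInDoubleDual ℝ X with hJ
  by_cases hmem : ∃ a ∈ A, J a = F
  · obtain ⟨a, _, ha⟩ := hmem
    rw [Set.mem_add]
    exact ⟨J a, ⟨a, rfl⟩, 0, by simp [le_of_lt (hε.trans hε')], by simp [ha]⟩
  push_neg at hmem
  -- F differs from J x for every x ∈ A
  have hsep : ∀ x ∈ A, ∃ g : StrongDual ℝ X, F g ≠ g x := by
    intro x hx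
    by_contra hc
    push_neg at hc
    exact hmem x hx (by ext g; exact (hc g).symm)
  choose! g hg using hsep
  -- key claim : |F f| ≤ ε for all unit f
  have key : ∀ f : StrongDual ℝ X, ‖f‖ ≤ 1 → ‖F f‖ ≤ ε := by
    intro f hf
    by_contra hc
    push_neg at hc
    have hSfin : {x ∈ A | ε < |f x|}.Finite := by
      rw [← Set.encard_lt_top_iff]
      exact lt_of_le_of_lt (h f hf) (WithTop.coe_lt_top N)
    set S := {x ∈ A | ε < |f x|} with hS
    set V : Set (WeakDual ℝ (StrongDual ℝ X)) :=
      {G | ε < |G f|} ∩ ⋂ x ∈ S, {G | G (g x) ≠ g x x} with hV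
    have hVopen : IsOpen V := by
      apply IsOpen.inter
      · exact isOpen_lt continuous_const ((WeakDual.eval_continuous f).abs)
      · refine Set.Finite.isOpen_biInter hSfin ?_
        intro x _
        have hc : Continuous fun G : WeakDual ℝ (StrongDual ℝ X) => G (g x) :=
          WeakDual.eval_continuous (g x)
        exact isOpen_ne_fun hc continuous_const
    have hFV : StrongDual.toWeakDual F ∈ V := by
      constructor
      · simpa using hc
      · simp only [Set.mem_iInter]
        intro x hx
        exact hg x hx.1
    have hF' : StrongDual.toWeakDual F ∈
        closure (⇑StrongDual.toWeakDual '' (⇑J '' A)) := hF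
    rw [mem_closure_iff] at hF'
    obtain ⟨G, hGV, hGmem⟩ := hF' V hVopen hFV
    obtain ⟨H, ⟨a, ha, hHa⟩, hHG⟩ := hGmem
    subst hHG
    subst hHa
    have hGa : ∀ φ : StrongDual ℝ X, StrongDual.toWeakDual (J a) φ = φ a := fun φ => rfl
    have haS : a ∈ S := ⟨ha, hGV.1⟩
    have := hGV.2
    simp only [Set.mem_iInter] at this
    exact this a haS rfl
  -- hence ‖F‖ ≤ ε
  have hnorm : ‖F‖ ≤ ε := by
    refine F.opNorm_le_bound (le_of_lt hε) ?_
    intro f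
    rcases eq_or_ne f 0 with rfl | hf0
    · simp
    · have hfpos : (0:ℝ) < ‖f‖ := norm_pos_iff.mpr hf0
      have h1 : ‖(‖f‖⁻¹ • f)‖ = 1 := by
        rw [norm_smul, norm_inv, norm_norm, inv_mul_cancel₀ hfpos.ne']
      have := key (‖f‖⁻¹ • f) (le_of_eq h1)
      rw [map_smul, norm_smul, norm_inv, norm_norm] at this
      calc ‖F f‖ = ‖f‖ * (‖f‖⁻¹ * ‖F f‖) := by
            field_simp
        _ ≤ ‖f‖ * ε := by
            exact mul_le_mul_of_nonneg_left this (le_of_lt hfpos)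
        _ = ε * ‖f‖ := mul_comm _ _
  rw [Set.mem_add]
  exact ⟨J 0, ⟨0, rfl⟩, F, by
    simp only [Metric.mem_closedBall, dist_zero_right]
    exact (le_of_eq (dist_zero_right F)).trans (hnorm.trans (le_of_lt hε')), by simp⟩
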